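/- Define the finite-population covariance S_{jj'} = (1/(N−1)) Σ_{i=1}^N (Y_i(j) − P_j)(Y_i(j') − P_{j'}). Then for any two distinct treatments j ≠ j', the identity S²_{j−j'} = S_j² + S_{j'}² − 2 S_{jj'} holds, and consequently under a completely randomized assignment Cov(p_j, p_{j'}) = −S_{jj'}/N. -/

import Mathlib

open Finset

/-- The finset of completely randomized assignments of `N` units to treatments in `J`
with group sizes `Nj`. -/
def assignments (N : ℕ) {J : Type*} [Fintype J] [DecidableEq J] (Nj : J → ℕ) :
    Finset (Fin N → J) :=
  Finset.univ.filter fun T => ∀ j, (Finset.univ.filter fun i => T i = j).card = Nj j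

/-- Expectation with respect to the uniform distribution on completely randomized
assignments. -/
noncomputable def expect {N : ℕ} {J : Type*} [Fintype J] [DecidableEq J]
    (Nj : J → ℕ) (f : (Fin N → J) → ℝ) : ℝ :=
  (∑ T ∈ assignments N Nj, f T) / ((assignments N Nj).card : ℝ)

/-- Variance with respect to the randomization distribution. -/
noncomputable def rvar {N : ℕ} {J : Type*} [Fintype J] [DecidableEq J]
    (Nj : J → ℕ) (f : (Fin N → J) → ℝ) : ℝ :=
  expect Nj fun T => (f T - expect Nj f) ^ 2

/-- Covariance with respect to the randomization distribution. -/
noncomputable def rcov {N : ℕ} {J : Type*} [Fintype J] [DecidableEq J]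
    (Nj : J → ℕ) (f g : (Fin N → J) → ℝ) : ℝ :=
  expect Nj fun T => (f T - expect Nj f) * (g T - expect Nj g)

/-- Observed group mean `p_j` of treatment `j` under assignment `T`. -/
noncomputable def pObs {N : ℕ} {J : Type*} [DecidableEq J]
    (Y : Fin N → J → ℝ) (Nj : J → ℕ) (j : J) (T : Fin N → J) : ℝ :=
  (∑ i ∈ Finset.univ.filter fun i => T i = j, Y i j) / (Nj j : ℝ)

/-- Population mean `P_j`. -/
noncomputable def Pmean {N : ℕ} {J : Type*} (Y : Fin N → J → ℝ) (j : J) : ℝ :=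
  (∑ i, Y i j) / (N : ℝ)

/-- Population variance `S_j²`. -/
noncomputable def S2 {N : ℕ} {J : Type*} (Y : Fin N → J → ℝ) (j : J) : ℝ :=
  (∑ i, (Y i j - Pmean Y j) ^ 2) / ((N : ℝ) - 1)

/-- Variance of unit-level differences `S²_{j-j'}`. -/
noncomputable def S2diff {N : ℕ} {J : Type*} (Y : Fin N → J → ℝ) (j j' : J) : ℝ :=
  (∑ i, (Y i j - Y i j' - (Pmean Y j - Pmean Y j')) ^ 2) / ((N : ℝ) - 1)

/-- Finite-population covariance `S_{jj'}`. -/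
noncomputable def Scov {N : ℕ} {J : Type*} (Y : Fin N → J → ℝ) (j j' : J) : ℝ :=
  (∑ i, (Y i j - Pmean Y j) * (Y i j' - Pmean Y j')) / ((N : ℝ) - 1)

section Aux

variable {N : ℕ} {J : Type*} [Fintype J] [DecidableEq J] {Nj : J → ℕ}

lemma mem_assignments {T : Fin N → J} :
    T ∈ assignments N Nj ↔ ∀ j, (univ.filter fun i => T i = j).card = Nj j := by
  simp [assignments]

lemma comp_mem_assignments (σ : Equiv.Perm (Fin N)) {T : Fin N → J}
    (hT : T ∈ assignments N Nj) : T ∘ σ ∈ assignments N Nj := by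
  rw [mem_assignments] at hT ⊢
  intro j
  rw [← hT j, card_filter, card_filter,
    ← Equiv.sum_comp σ (fun i => if T i = j then 1 else 0)]
  rfl

lemma sum_comp_perm (σ : Equiv.Perm (Fin N)) (f : (Fin N → J) → ℝ) :
    ∑ T ∈ assignments N Nj, f (T ∘ σ) = ∑ T ∈ assignments N Nj, f T := by
  refine Finset.sum_nbij' (fun T => T ∘ σ) (fun T => T ∘ σ.symm) ?_ ?_ ?_ ?_ ?_
  · intro T hT; exact comp_mem_assignments σ hT
  · intro T hT; exact comp_mem_assignments σ.symm hT
  · intro T hT; funext i; simp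
  · intro T hT; funext i; simp
  · intro T hT; rfl

lemma assignments_nonempty (hsum : ∑ j, Nj j = N) : (assignments N Nj).Nonempty := by
  have hcard : Fintype.card ((j : J) × Fin (Nj j)) = Fintype.card (Fin N) := by
    simp [Fintype.card_sigma, hsum]
  obtain ⟨e⟩ := Fintype.card_eq.mp hcard
  refine ⟨fun i => (e.symm i).1, ?_⟩
  rw [mem_assignments]
  intro j
  rw [card_filter, Equiv.sum_comp e.symm (fun s : (j : J) × Fin (Nj j) => if s.1 = j then 1 else 0)]
  rw [← Finset.univ_sigma_univ, Finset.sum_sigma]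
  simp [apply_ite Finset.card, Finset.sum_ite_eq]


lemma sum_ind_const (j : J) (i i' : Fin N) :
    ∑ T ∈ assignments N Nj, (if T i = j then (1:ℝ) else 0) =
    ∑ T ∈ assignments N Nj, (if T i' = j then (1:ℝ) else 0) := by
  have h := sum_comp_perm (Nj := Nj) (Equiv.swap i i')
    (fun T => if T i = j then (1:ℝ) else 0)
  simpa [Function.comp, Equiv.swap_apply_left] using h.symm

lemma sum_ind (hN : 2 ≤ N) (hsum : ∑ j, Nj j = N) (j : J) (i : Fin N) :
    ∑ T ∈ assignments N Nj, (if T i = j then (1:ℝ) else 0) =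
    ((assignments N Nj).card * Nj j : ℝ) / N := by
  have hNne : (N : ℝ) ≠ 0 := by positivity
  have key : (N : ℝ) * ∑ T ∈ assignments N Nj, (if T i = j then (1:ℝ) else 0)
      = ((assignments N Nj).card * Nj j : ℝ) := by
    calc (N : ℝ) * ∑ T ∈ assignments N Nj, (if T i = j then (1:ℝ) else 0)
        = ∑ i' : Fin N, ∑ T ∈ assignments N Nj, (if T i' = j then (1:ℝ) else 0) := by
          rw [Finset.sum_congr rfl fun i' _ => (sum_ind_const j i' i)]
          simp [mul_comm]
      _ = ∑ T ∈ assignments N Nj, ∑ i' : Fin N, (if T i' = j then (1:ℝ) else 0) :=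
          Finset.sum_comm
      _ = ∑ T ∈ assignments N Nj, (Nj j : ℝ) := by
          refine Finset.sum_congr rfl fun T hT => ?_
          rw [Finset.sum_boole]
          rw [mem_assignments] at hT
          rw [hT j]
      _ = ((assignments N Nj).card * Nj j : ℝ) := by rw [Finset.sum_const, nsmul_eq_mul]
  rw [eq_div_iff hNne]
  linarith [key]

lemma exists_perm_pair {i k i' k' : Fin N} (h : i ≠ k) (h' : i' ≠ k') :
    ∃ σ : Equiv.Perm (Fin N), σ i' = i ∧ σ k' = k := by
  set s := Equiv.swap i' i with hs
  have hsk : s k' ≠ i := by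
    intro hcon
    apply h'
    apply s.injective
    rw [hcon, hs, Equiv.swap_apply_left]
  refine ⟨(Equiv.swap (s k') k) * s, ?_, ?_⟩
  · have : s i' = i := Equiv.swap_apply_left i' i
    simp only [Equiv.Perm.mul_apply, this]
    exact Equiv.swap_apply_of_ne_of_ne (Ne.symm hsk) h
  · simp only [Equiv.Perm.mul_apply]
    exact Equiv.swap_apply_left _ _

lemma sum_ind2_const {j j' : J} {i k i' k' : Fin N} (hik : i ≠ k) (hik' : i' ≠ k') :
    ∑ T ∈ assignments N Nj, (if T i = j then (1:ℝ) else 0) * (if T k = j' then 1 else 0) =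
    ∑ T ∈ assignments N Nj, (if T i' = j then (1:ℝ) else 0) * (if T k' = j' then 1 else 0) := by
  obtain ⟨σ, hσi, hσk⟩ := exists_perm_pair hik' hik
  have h := sum_comp_perm (Nj := Nj) σ
    (fun T => (if T i = j then (1:ℝ) else 0) * (if T k = j' then 1 else 0))
  rw [← h]
  refine Finset.sum_congr rfl fun T _ => ?_
  simp [Function.comp, hσi, hσk]

lemma sum_ind2 (hN : 2 ≤ N) {j j' : J} (hjj : j ≠ j') {i k : Fin N} (hik : i ≠ k) :
    ∑ T ∈ assignments N Nj, (if T i = j then (1:ℝ) else 0) * (if T k = j' then 1 else 0) =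
    ((assignments N Nj).card * Nj j * Nj j' : ℝ) / ((N : ℝ) * ((N : ℝ) - 1)) := by
  have hNne : (N : ℝ) ≠ 0 := by positivity
  have hN1 : (N : ℝ) - 1 ≠ 0 := by
    have : (2 : ℝ) ≤ (N : ℝ) := by exact_mod_cast hN
    linarith
  set S := ∑ T ∈ assignments N Nj, (if T i = j then (1:ℝ) else 0) * (if T k = j' then 1 else 0)
    with hS
  have key : ((N : ℝ) * ((N : ℝ) - 1)) * S = ((assignments N Nj).card * Nj j * Nj j' : ℝ) := by
    have hcardOff : ((univ : Finset (Fin N)).offDiag.card : ℝ) = (N : ℝ) * ((N : ℝ) - 1) := by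
      rw [Finset.offDiag_card, card_univ, Fintype.card_fin]
      have h1 : N ≤ N * N := Nat.le_mul_of_pos_left N (by omega)
      rw [Nat.cast_sub h1]
      push_cast
      ring
    calc ((N : ℝ) * ((N : ℝ) - 1)) * S
        = ∑ p ∈ (univ : Finset (Fin N)).offDiag,
            ∑ T ∈ assignments N Nj, (if T p.1 = j then (1:ℝ) else 0) * (if T p.2 = j' then 1 else 0) := by
          have hconst : ∀ p ∈ (univ : Finset (Fin N)).offDiag,
              (∑ T ∈ assignments N Nj,
                (if T p.1 = j then (1:ℝ) else 0) * (if T p.2 = j' then 1 else 0)) = S := by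
            intro p hp
            have hp' := Finset.mem_offDiag.mp hp
            exact sum_ind2_const hp'.2.2 hik
          rw [Finset.sum_congr rfl hconst, Finset.sum_const, nsmul_eq_mul, hcardOff]
      _ = ∑ T ∈ assignments N Nj, ∑ p ∈ (univ : Finset (Fin N)).offDiag,
            (if T p.1 = j then (1:ℝ) else 0) * (if T p.2 = j' then 1 else 0) :=
          Finset.sum_comm
      _ = ∑ T ∈ assignments N Nj, ((Nj j : ℝ) * (Nj j' : ℝ)) := by
          refine Finset.sum_congr rfl fun T hT => ?_
          have hfull : ∑ p ∈ (univ : Finset (Fin N)) ×ˢ (univ : Finset (Fin N)),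
              (if T p.1 = j then (1:ℝ) else 0) * (if T p.2 = j' then 1 else 0)
              = ∑ p ∈ (univ : Finset (Fin N)).offDiag,
              (if T p.1 = j then (1:ℝ) else 0) * (if T p.2 = j' then 1 else 0) := by
            rw [show (univ : Finset (Fin N)).offDiag = ((univ : Finset (Fin N)) ×ˢ univ).filter (fun p => ¬ p.1 = p.2) from by ext p; simp [Finset.mem_offDiag]]
            rw [← Finset.sum_filter_add_sum_filter_not ((univ : Finset (Fin N)) ×ˢ univ)
              (fun p => p.1 = p.2)]
            have hzero : ∑ p ∈ ((univ : Finset (Fin N)) ×ˢ univ).filter (fun p => p.1 = p.2),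
                (if T p.1 = j then (1:ℝ) else 0) * (if T p.2 = j' then 1 else 0) = 0 := by
              refine Finset.sum_eq_zero fun p hp => ?_
              have hpe : p.1 = p.2 := (Finset.mem_filter.mp hp).2
              by_cases h1 : T p.1 = j
              · have h2 : T p.2 ≠ j' := by rw [← hpe, h1]; exact hjj
                simp [h1, h2]
              · simp [h1]
            rw [hzero, zero_add]
          rw [← hfull, Finset.sum_product]
          dsimp only
          show ∑ x, ∑ y, (if T x = j then (1:ℝ) else 0) * (if T y = j' then 1 else 0) = _
          rw [← Finset.sum_mul_sum]
          congr 1 <;> rw [Finset.sum_boole] <;>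
            exact_mod_cast congrArg (Nat.cast (R := ℝ)) ((mem_assignments.mp hT) _)
      _ = ((assignments N Nj).card * Nj j * Nj j' : ℝ) := by
          rw [Finset.sum_const, nsmul_eq_mul]; ring
  rw [eq_div_iff (by exact mul_ne_zero hNne hN1)]
  linarith [key]

end Aux

lemma rcov_eq {N : ℕ} {J : Type*} [Fintype J] [DecidableEq J] {Nj : J → ℕ}
    (hA : ((assignments N Nj).card : ℝ) ≠ 0) (f g : (Fin N → J) → ℝ) :
    rcov Nj f g = _root_.expect Nj (fun T => f T * g T) - _root_.expect Nj f * _root_.expect Nj g := by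
  unfold rcov _root_.expect
  set M := ((assignments N Nj).card : ℝ) with hM
  set Sf := ∑ T ∈ assignments N Nj, f T with hSf
  set Sg := ∑ T ∈ assignments N Nj, g T with hSg
  have hexp : ∑ T ∈ assignments N Nj, (f T - Sf / M) * (g T - Sg / M)
      = (∑ T ∈ assignments N Nj, f T * g T) - Sf * Sg / M := by
    have expand : ∀ T ∈ assignments N Nj, (f T - Sf/M) * (g T - Sg/M)
        = f T * g T - (Sg/M) * f T - (Sf/M) * g T + (Sf/M)*(Sg/M) := fun T _ => by ring
    rw [Finset.sum_congr rfl expand]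
    rw [Finset.sum_add_distrib, Finset.sum_sub_distrib, Finset.sum_sub_distrib,
      ← Finset.mul_sum, ← Finset.mul_sum, Finset.sum_const, nsmul_eq_mul, ← hSf, ← hSg, ← hM]
    field_simp
    ring
  rw [hexp, sub_div]
  congr 1
  field_simp

/-- For distinct treatments `j ≠ j'`, `S²_{j-j'} = S_j² + S_{j'}² - 2 S_{jj'}`, and
consequently under a completely randomized assignment `Cov(p_j, p_{j'}) = -S_{jj'}/N`. -/
theorem S2diff_and_rcov {N J : ℕ} (hN : 2 ≤ N)
    (Y : Fin N → Fin J → ℝ) (Nj : Fin J → ℕ)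
    (hpos : ∀ j, 1 ≤ Nj j) (hsum : ∑ j, Nj j = N) :
    ∀ j j' : Fin J, j ≠ j' →
      S2diff Y j j' = S2 Y j + S2 Y j' - 2 * Scov Y j j' ∧
      rcov Nj (pObs Y Nj j) (pObs Y Nj j') = -(Scov Y j j') / (N : ℝ) := by
  intro j j' hjj
  have hNR : (N : ℝ) ≠ 0 := by positivity
  have hN2R : (2 : ℝ) ≤ (N : ℝ) := by exact_mod_cast hN
  have hN1 : (N : ℝ) - 1 ≠ 0 := by linarith
  have hAne : (assignments N Nj).Nonempty := assignments_nonempty hsum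
  have hM : ((assignments N Nj).card : ℝ) ≠ 0 :=
    Nat.cast_ne_zero.mpr (Finset.card_ne_zero.mpr hAne)
  set M := ((assignments N Nj).card : ℝ) with hMdef
  constructor
  · unfold S2diff S2 Scov
    have h : ∑ i, (Y i j - Y i j' - (Pmean Y j - Pmean Y j'))^2
        = ∑ i, ((Y i j - Pmean Y j)^2 + (Y i j' - Pmean Y j')^2
          - 2 * ((Y i j - Pmean Y j) * (Y i j' - Pmean Y j'))) :=
      Finset.sum_congr rfl fun i _ => by ring
    rw [h, Finset.sum_sub_distrib, Finset.sum_add_distrib, ← Finset.mul_sum]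
    ring
  · have hNjne : ∀ jj : Fin J, (Nj jj : ℝ) ≠ 0 := fun jj => by
      have := hpos jj; positivity
    have hfilter : ∀ (T : Fin N → Fin J) (jj : Fin J),
        ∑ i ∈ univ.filter (fun i => T i = jj), Y i jj
        = ∑ i, (if T i = jj then (1:ℝ) else 0) * Y i jj := by
      intro T jj
      rw [Finset.sum_filter]
      exact Finset.sum_congr rfl fun i _ => by split_ifs <;> simp
    have hsumP : ∀ jj : Fin J, ∑ T ∈ assignments N Nj, pObs Y Nj jj T
        = M * (∑ i, Y i jj) / (N : ℝ) := by
      intro jj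
      unfold pObs
      rw [← Finset.sum_div]
      have key : ∑ T ∈ assignments N Nj, ∑ i ∈ univ.filter (fun i => T i = jj), Y i jj
          = (M * Nj jj / N) * ∑ i, Y i jj := by
        calc ∑ T ∈ assignments N Nj, ∑ i ∈ univ.filter (fun i => T i = jj), Y i jj
            = ∑ T ∈ assignments N Nj, ∑ i, (if T i = jj then (1:ℝ) else 0) * Y i jj :=
              Finset.sum_congr rfl fun T _ => hfilter T jj
          _ = ∑ i, ∑ T ∈ assignments N Nj, (if T i = jj then (1:ℝ) else 0) * Y i jj :=
              Finset.sum_comm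
          _ = ∑ i, (M * Nj jj / N) * Y i jj := by
              refine Finset.sum_congr rfl fun i _ => ?_
              rw [← Finset.sum_mul, sum_ind hN hsum jj i]
          _ = (M * Nj jj / N) * ∑ i, Y i jj := by rw [Finset.mul_sum]
      rw [key]
      have := hNjne jj
      field_simp
    set C := M * Nj j * Nj j' / ((N : ℝ) * ((N : ℝ) - 1)) with hC
    have hW : ∀ i k : Fin N,
        (∑ T ∈ assignments N Nj, (if T i = j then (1:ℝ) else 0) * (if T k = j' then 1 else 0))
        = if i = k then 0 else C := by
      intro i k
      by_cases h : i = k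
      · subst h
        rw [if_pos rfl]
        refine Finset.sum_eq_zero fun T _ => ?_
        by_cases h1 : T i = j
        · simp [h1, hjj]
        · simp [h1]
      · rw [if_neg h, hC, hMdef]
        exact sum_ind2 hN hjj h
    have hPT : ∀ T ∈ assignments N Nj, pObs Y Nj j T * pObs Y Nj j' T
        = (∑ i, ∑ k, ((if T i = j then (1:ℝ) else 0) * Y i j)
            * ((if T k = j' then (1:ℝ) else 0) * Y k j')) / ((Nj j : ℝ) * (Nj j' : ℝ)) := by
      intro T _
      unfold pObs
      rw [hfilter T j, hfilter T j', div_mul_div_comm, Finset.sum_mul_sum]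
    have hsum2 : ∑ T ∈ assignments N Nj, pObs Y Nj j T * pObs Y Nj j' T
        = (C * ((∑ i, Y i j) * (∑ i, Y i j') - ∑ i, Y i j * Y i j'))
          / ((Nj j : ℝ) * (Nj j' : ℝ)) := by
      calc ∑ T ∈ assignments N Nj, pObs Y Nj j T * pObs Y Nj j' T
          = (∑ T ∈ assignments N Nj, ∑ i, ∑ k, ((if T i = j then (1:ℝ) else 0) * Y i j)
              * ((if T k = j' then (1:ℝ) else 0) * Y k j')) / ((Nj j : ℝ) * (Nj j' : ℝ)) := by
            rw [Finset.sum_congr rfl hPT, ← Finset.sum_div]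
        _ = (∑ i, ∑ k, (Y i j * Y k j') * (if i = k then 0 else C))
              / ((Nj j : ℝ) * (Nj j' : ℝ)) := by
            congr 1
            rw [Finset.sum_comm]
            refine Finset.sum_congr rfl fun i _ => ?_
            rw [Finset.sum_comm]
            refine Finset.sum_congr rfl fun k _ => ?_
            rw [← hW i k, Finset.mul_sum]
            exact Finset.sum_congr rfl fun T _ => by ring
        _ = (C * ((∑ i, Y i j) * (∑ i, Y i j') - ∑ i, Y i j * Y i j'))
              / ((Nj j : ℝ) * (Nj j' : ℝ)) := by
            congr 1
            have hinner : ∀ i : Fin N, ∑ k, (Y i j * Y k j') * (if i = k then 0 else C)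
                = (∑ k, Y i j * Y k j' * C) - Y i j * Y i j' * C := by
              intro i
              have hterm : ∀ k : Fin N, (Y i j * Y k j') * (if i = k then 0 else C)
                  = Y i j * Y k j' * C - (if i = k then Y i j * Y k j' * C else 0) := by
                intro k
                split_ifs with h
                · subst h; ring
                · ring
              rw [Finset.sum_congr rfl fun k _ => hterm k, Finset.sum_sub_distrib,
                Finset.sum_ite_eq]
              simp
            rw [Finset.sum_congr rfl fun i _ => hinner i, Finset.sum_sub_distrib]
            have h1 : ∑ i, ∑ k, Y i j * Y k j' * C
                = ((∑ i, Y i j) * (∑ i, Y i j')) * C := by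
              have hrow : ∀ i : Fin N, ∑ k, Y i j * Y k j' * C
                  = (Y i j * C) * ∑ k, Y k j' := by
                intro i
                rw [Finset.mul_sum]
                exact Finset.sum_congr rfl fun k _ => by ring
              rw [Finset.sum_congr rfl fun i _ => hrow i, ← Finset.sum_mul, ← Finset.sum_mul]
              ring
            rw [h1, ← Finset.sum_mul]
            ring
    rw [rcov_eq hM]
    unfold _root_.expect
    rw [hsum2, hsumP j, hsumP j']
    have hexpand : ∑ i, (Y i j - Pmean Y j) * (Y i j' - Pmean Y j')
        = (∑ i, Y i j * Y i j') - (∑ i, Y i j) * (∑ i, Y i j') / N := by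
      have hterm : ∀ i ∈ (univ : Finset (Fin N)), (Y i j - Pmean Y j) * (Y i j' - Pmean Y j')
          = Y i j * Y i j' - Pmean Y j' * Y i j - Pmean Y j * Y i j' + Pmean Y j * Pmean Y j' :=
        fun i _ => by ring
      rw [Finset.sum_congr rfl hterm, Finset.sum_add_distrib, Finset.sum_sub_distrib,
        Finset.sum_sub_distrib, ← Finset.mul_sum, ← Finset.mul_sum, Finset.sum_const,
        card_univ, Fintype.card_fin, nsmul_eq_mul]
      unfold Pmean
      field_simp
      ring
    unfold Scov
    rw [hexpand, hC]
    have hNj := hNjne j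
    have hNj' := hNjne j'
    field_simp
    ring
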